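/- For every probability measure μ on I and every x ∈ I, Σ_{y ∈ I} p(x, y) = 1; that is, p is a stochastic Markov kernel on the countable set I. -/

import Mathlib

open Filter Topology MeasureTheory

/-- Words in the free monoid on two letters `α = true`, `β = false`. -/
abbrev Word := List Bool

/-- Conjugation: reverse the word and swap the two letters. -/
def wconj (x : Word) : Word := x.reverse.map (fun b => !b)

/-- Fusion multiplicity `m(z; x, y)`: the number of triples `(x₀, w, y₀)` with
`x = x₀w`, `y = w̄y₀` and `z = x₀y₀`. -/
def fm (x y z : Word) : ℕ :=
  ((Finset.range (x.length + 1)).filter (fun k =>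
    wconj (x.drop k) <+: y ∧ z = x.take k ++ y.drop (x.length - k))).card

/-- Maximal alternating blocks of a word. -/
def blocks : Word → List Word
  | [] => []
  | a :: rest =>
    match blocks rest with
    | [] => [[a]]
    | b :: bs => if b.head? = some a then [a] :: b :: bs else (a :: b) :: bs

/-- The quantum integer `[n]_q = (qⁿ - q⁻ⁿ)/(q - q⁻¹)`. -/
noncomputable def qnum (q : ℝ) (n : ℕ) : ℝ := (q ^ n - q⁻¹ ^ n) / (q - q⁻¹)

/-- Quantum dimension `dim_q(x) = ∏ᵢ [|xᵢ|+1]_q` over the maximal alternating blocks. -/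
noncomputable def dimq (q : ℝ) (x : Word) : ℝ :=
  ((blocks x).map (fun b => qnum q (b.length + 1))).prod

/-- Classical dimension `dim₁(x) = ∏ᵢ (|xᵢ|+1)` over the maximal alternating blocks. -/
def dim1 (x : Word) : ℕ := ((blocks x).map (fun b => b.length + 1)).prod
/-- The transition kernel of the random walk on `I` associated with a probability
measure `μ`: `p(x,y) = Σ_z μ(z)·m(z; x̄, y)·dim_q(y)/(dim_q(x)·dim_q(z))`. -/
noncomputable def pker (q : ℝ) (μ : Word → ℝ) (x y : Word) : ℝ :=
  ∑ᶠ z : Word, μ z * (fm (wconj x) y z : ℝ) * dimq q y / (dimq q x * dimq q z)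

/-- The `n`-step transition probabilities: `p₁ = p` and
`p_{n+1}(x,y) = Σ_u p_n(x,u)·p(u,y)`.  (The value at `n = 0` is irrelevant.) -/
noncomputable def pn (q : ℝ) (μ : Word → ℝ) : ℕ → Word → Word → ℝ
  | 0, _, _ => 0
  | 1, x, y => pker q μ x y
  | n + 2, x, y => ∑' u : Word, pn q μ (n + 1) x u * pker q μ u y

@[simp] lemma wconj_nil : wconj [] = [] := rfl
@[simp] lemma wconj_length (x : Word) : (wconj x).length = x.length := by
  simp [wconj]
@[simp] lemma wconj_append (u v : Word) : wconj (u ++ v) = wconj v ++ wconj u := by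
  simp [wconj]
@[simp] lemma wconj_wconj (x : Word) : wconj (wconj x) = x := by
  simp [wconj, List.map_reverse, Function.comp_def]
lemma wconj_singleton (a : Bool) : wconj [a] = [!a] := rfl
lemma wconj_eq_nil_iff {x : Word} : wconj x = [] ↔ x = [] := by
  constructor
  · intro h; have := congrArg List.length h; simpa using this
  · rintro rfl; rfl
lemma wconj_drop (x : Word) (k : ℕ) (hk : k ≤ x.length) :
    (wconj x).drop k = wconj (x.take (x.length - k)) := by
  simp only [wconj, ← List.map_drop, List.reverse_take]
  congr 2
  omega
lemma wconj_take (x : Word) (k : ℕ) (hk : k ≤ x.length) :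
    (wconj x).take k = wconj (x.drop (x.length - k)) := by
  simp only [wconj, ← List.map_take, List.reverse_drop]
  congr 2
  omega



section Q
variable {q : ℝ} (hq0 : 0 < q) (hq1 : q < 1)
include hq0 hq1

lemma q_lt_inv : q - q⁻¹ < 0 := by
  have : 1 < q⁻¹ := (one_lt_inv₀ hq0).mpr hq1
  linarith

lemma qnum_one' : qnum q 1 = 1 := by
  have := q_lt_inv hq0 hq1
  rw [qnum, pow_one, pow_one, div_self (by linarith)]

lemma qnum_pos (n : ℕ) (hn : 1 ≤ n) : 0 < qnum q n := by
  have h1 : 1 < q⁻¹ := (one_lt_inv₀ hq0).mpr hq1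
  have h2 : q ^ n < 1 := pow_lt_one₀ (le_of_lt hq0) hq1 (by omega)
  have h3 : 1 < q⁻¹ ^ n := one_lt_pow₀ h1 (by omega)
  have h4 : q - q⁻¹ < 0 := q_lt_inv hq0 hq1
  apply div_pos_of_neg_of_neg <;> linarith

lemma qnum_mul (m n : ℕ) :
    qnum q (m + 1) * qnum q (n + 1) = qnum q (m + n + 1) + qnum q m * qnum q n := by
  have hq : q ≠ 0 := ne_of_gt hq0
  have h1 : 1 < q⁻¹ := (one_lt_inv₀ hq0).mpr hq1
  have hd : q - q⁻¹ ≠ 0 := by linarith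
  have ht : q * q⁻¹ = 1 := mul_inv_cancel₀ hq
  have hA : q ^ m * q⁻¹ ^ m = 1 := by rw [← mul_pow, ht, one_pow]
  have hB : q ^ n * q⁻¹ ^ n = 1 := by rw [← mul_pow, ht, one_pow]
  simp only [qnum, pow_succ, pow_add]
  revert hd ht hA hB
  generalize q ^ m = A
  generalize q ^ n = B
  generalize q⁻¹ ^ m = A'
  generalize q⁻¹ ^ n = B'
  generalize q⁻¹ = t
  intro hd ht hA hB
  have key : (A*q - A'*t)*(B*q - B'*t) = (A*B*q - A'*B'*t)*(q-t) + (A-A')*(B-B') := by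
    linear_combination (A * B - A * B' - A' * B + A' * B') * ht
  rw [div_mul_div_comm, div_mul_div_comm, key]
  field_simp
end Q


lemma blocks_cons (a : Bool) (rest : Word) :
    blocks (a :: rest) = match blocks rest with
      | [] => [[a]]
      | b :: bs => if b.head? = some a then [a] :: b :: bs else (a :: b) :: bs := rfl

lemma blocks_cons_ex (a : Bool) (w : Word) :
    ∃ t ts, blocks (a :: w) = (a :: t) :: ts := by
  rw [blocks_cons]
  rcases h : blocks w with _ | ⟨b, bs⟩
  · exact ⟨[], [], rfl⟩
  · by_cases hb : b.head? = some a
    · exact ⟨[], b :: bs, by simp [hb]⟩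
    · exact ⟨b, bs, by simp [hb]⟩

@[simp] lemma blocks_nil : blocks [] = [] := rfl

lemma blocks_eq_nil_iff {w : Word} : blocks w = [] ↔ w = [] := by
  constructor
  · intro h
    cases w with
    | nil => rfl
    | cons a w => obtain ⟨t, ts, ht⟩ := blocks_cons_ex a w; rw [ht] at h; cases h
  · rintro rfl; rfl

lemma blocks_append : ∀ (u : Word), u ≠ [] → ∀ (v : Word), v ≠ [] →
    blocks (u ++ v) =
      if u.getLast? = v.head? then blocks u ++ blocks v
      else (blocks u).dropLast ++
        ((blocks u).getLastD [] ++ (blocks v).headD []) :: (blocks v).tail := by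
  intro u
  induction u with
  | nil => intro h; exact absurd rfl h
  | cons c u' ih =>
    intro _ v hv
    obtain ⟨d, v', rfl⟩ : ∃ d v', v = d :: v' := by
      cases v with | nil => exact absurd rfl hv | cons d v' => exact ⟨d, v', rfl⟩
    obtain ⟨t, ts, hvb⟩ := blocks_cons_ex d v'
    cases u' with
    | nil =>
      simp only [List.singleton_append, blocks_cons, hvb]
      by_cases hcd : d = c
      · subst hcd
        simp [hvb]
      · have h1 : ¬ ((d :: t).head? = some c) := by simp [hcd]
        have h2 : ¬ (List.getLast? [c] = List.head? (d :: v')) := by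
          simp only [List.getLast?_singleton, List.head?_cons, Option.some.injEq]
          exact fun h => hcd h.symm
        simp only [h1, if_false, h2]
        simp [hvb]
    | cons e u'' =>
      have hne : (e :: u'' : Word) ≠ [] := by simp
      obtain ⟨t1, ts1, hub⟩ := blocks_cons_ex e u''
      have IH := ih hne (d :: v') hv
      have hlast : (c :: e :: u'' : Word).getLast? = (e :: u'' : Word).getLast? :=
        List.getLast?_cons_cons
      have happ : ((c :: e :: u'') : Word) ++ d :: v' = c :: ((e :: u'') ++ d :: v') := rfl
      have hcu : blocks (c :: e :: u'') =
          if (e :: t1).head? = some c then [c] :: (e :: t1) :: ts1 else (c :: e :: t1) :: ts1 := by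
        rw [blocks_cons, hub]
      by_cases hcond : (e :: u'' : Word).getLast? = (d :: v' : Word).head?
      · have IH1 : blocks ((e :: u'') ++ d :: v') = blocks (e :: u'') ++ blocks (d :: v') := by
          rw [IH, if_pos hcond]
        rw [happ, blocks_cons, IH1, hub, hvb, hlast, if_pos hcond, hcu]
        by_cases hec : e = c <;> simp [hec]
      · have IH2 : blocks ((e :: u'') ++ d :: v') =
            (blocks (e :: u'')).dropLast ++
              ((blocks (e :: u'')).getLastD [] ++ (blocks (d :: v')).headD []) ::
                (blocks (d :: v')).tail := by
          rw [IH, if_neg hcond]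
        rw [happ, blocks_cons, IH2, hub, hvb, hlast, if_neg hcond, hcu]
        cases ts1 with
        | nil => by_cases hec : e = c <;> simp [hec]
        | cons s ss => by_cases hec : e = c <;> simp [hec]



lemma list_decomp {α : Type*} (l : List α) (hd : α) (h : l ≠ []) :
    l.dropLast ++ [l.getLastD hd] = l := by
  induction l using List.reverseRecOn with
  | nil => cases h rfl
  | append_singleton l a _ => simp

lemma blocks_singleton (a : Bool) : blocks [a] = [[a]] := rfl

section D
variable {q : ℝ} (hq0 : 0 < q) (hq1 : q < 1)
include hq0 hq1

omit hq0 hq1 in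
@[simp] lemma dimq_nil' : dimq q [] = 1 := by simp [dimq]

lemma dimq_pos (w : Word) : 0 < dimq q w := by
  apply List.prod_pos
  intro a ha
  simp only [List.mem_map] at ha
  obtain ⟨b, _, rfl⟩ := ha
  exact qnum_pos hq0 hq1 _ (by omega)

lemma dimq_snoc (x : Word) (a : Bool) :
    dimq q x = (((blocks (x ++ [a])).dropLast).map (fun b => qnum q (b.length + 1))).prod
      * qnum q ((blocks (x ++ [a])).getLastD []).length ∧
    dimq q (x ++ [a]) = (((blocks (x ++ [a])).dropLast).map (fun b => qnum q (b.length + 1))).prod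
      * qnum q (((blocks (x ++ [a])).getLastD []).length + 1) := by
  have hb : blocks (x ++ [a]) ≠ [] := by
    rw [Ne, blocks_eq_nil_iff]; simp
  have hdecomp := list_decomp _ ([] : Word) hb
  constructor
  · rcases eq_or_ne x [] with rfl | hx
    · simp [dimq, blocks_cons]
      exact (qnum_one' hq0 hq1).symm
    · rw [blocks_append x hx [a] (by simp), blocks_singleton]
      have hbx : blocks x ≠ [] := by rw [Ne, blocks_eq_nil_iff]; exact hx
      by_cases hc : x.getLast? = ([a] : Word).head?
      · rw [if_pos hc, List.dropLast_concat, List.getLastD_concat]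
        rw [List.length_singleton, qnum_one' hq0 hq1, mul_one]
        rfl
      · rw [if_neg hc]
        simp only [List.headD_cons, List.tail_cons]
        rw [List.dropLast_concat, List.getLastD_concat]
        conv_lhs => rw [dimq, ← list_decomp (blocks x) [] hbx]
        simp [mul_comm]
  · conv_lhs => rw [dimq, ← hdecomp]
    simp [mul_comm]
end D

lemma blocks_cons_nil {rest : Word} (a : Bool) (h : blocks rest = []) :
    blocks (a :: rest) = [[a]] := by
  rw [blocks_cons, h]

lemma blocks_cons' {rest : Word} (a : Bool) {b : Word} {bs : List Word}
    (h : blocks rest = b :: bs) :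
    blocks (a :: rest) = if b.head? = some a then [a] :: b :: bs else (a :: b) :: bs := by
  rw [blocks_cons, h]

section E
variable {q : ℝ} (hq0 : 0 < q) (hq1 : q < 1)
include hq0 hq1

lemma dimq_cons (b : Bool) (y : Word) :
    dimq q y = qnum q ((blocks (b :: y)).headD []).length
        * (((blocks (b :: y)).tail).map (fun c => qnum q (c.length + 1))).prod ∧
    dimq q (b :: y) = qnum q (((blocks (b :: y)).headD []).length + 1)
        * (((blocks (b :: y)).tail).map (fun c => qnum q (c.length + 1))).prod := by
  rcases h : blocks y with _ | ⟨c, cs⟩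
  · have : y = [] := blocks_eq_nil_iff.mp h
    subst this
    rw [blocks_singleton]
    constructor
    · simp [qnum_one' hq0 hq1]
    · simp [dimq, blocks_singleton]
  · rw [blocks_cons' b h]
    by_cases hc : c.head? = some b
    · rw [if_pos hc]
      constructor
      · simp only [List.headD_cons, List.tail_cons, List.length_singleton,
          qnum_one' hq0 hq1, one_mul]
        rw [dimq, h]
      · rw [dimq, blocks_cons' b h, if_pos hc]
        simp
    · rw [if_neg hc]
      constructor
      · simp only [List.headD_cons, List.tail_cons, List.length_cons]
        rw [dimq, h]
        simp [mul_comm]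
      · rw [dimq, blocks_cons' b h, if_neg hc]
        simp [List.length_cons]
end E

section F
variable {q : ℝ} (hq0 : 0 < q) (hq1 : q < 1)
include hq0 hq1

omit hq0 hq1 in
lemma dimq_def (w : Word) :
    dimq q w = ((blocks w).map (fun c => qnum q (c.length + 1))).prod := rfl

lemma dimq_key (x : Word) (a b : Bool) (y : Word) :
    dimq q (x ++ [a]) * dimq q (b :: y) =
      dimq q (x ++ a :: b :: y) + if b = !a then dimq q x * dimq q y else 0 := by
  have hxa : x ++ a :: b :: y = (x ++ [a]) ++ (b :: y) := by simp
  rw [hxa]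
  have hu : x ++ [a] ≠ [] := by simp
  have hulast : (x ++ [a]).getLast? = some a := List.getLast?_concat
  have happ := blocks_append (x ++ [a]) hu (b :: y) (by simp)
  by_cases hb : b = !a
  · have hcond : ¬ ((x ++ [a]).getLast? = (b :: y).head?) := by
      rw [hulast, hb]
      simp only [List.head?_cons, Option.some.injEq]
      cases a <;> simp
    rw [if_neg hcond] at happ
    obtain ⟨h1, h2⟩ := dimq_snoc hq0 hq1 x a
    obtain ⟨h3, h4⟩ := dimq_cons hq0 hq1 b y
    rw [if_pos hb, h1, h2, h3, h4, dimq_def, happ]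
    simp only [List.map_append, List.prod_append, List.map_cons, List.prod_cons,
      List.length_append]
    linear_combination (((blocks (x ++ [a])).dropLast.map (fun c => qnum q (c.length + 1))).prod *
        (((blocks (b :: y)).tail).map (fun c => qnum q (c.length + 1))).prod) *
      qnum_mul hq0 hq1 ((blocks (x ++ [a])).getLastD []).length ((blocks (b :: y)).headD []).length
  · have hba : b = a := by revert hb; cases a <;> cases b <;> simp
    subst hba
    have hcond : (x ++ [b]).getLast? = (b :: y).head? := by rw [hulast]; rfl
    rw [if_pos hcond] at happ
    rw [if_neg hb, add_zero, dimq_def (((x ++ [b]) ++ b :: y)), happ]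
    rw [dimq_def (x ++ [b]), dimq_def (b :: y)]
    simp [List.map_append, List.prod_append]
end F

section G
variable {q : ℝ} (hq0 : 0 < q) (hq1 : q < 1)
include hq0 hq1

lemma key_sum : ∀ (x y : Word),
    (∑ k ∈ Finset.range (x.length + 1),
      if wconj (x.drop k) <+: y then dimq q (x.take k ++ y.drop (x.length - k)) else 0)
    = dimq q x * dimq q y := by
  intro x
  induction x using List.reverseRecOn with
  | nil =>
    intro y
    simp [List.nil_prefix]
  | append_singleton x' a ih =>
    intro y
    have hlen : (x' ++ [a]).length = x'.length + 1 := by simp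
    rw [hlen, Finset.sum_range_succ]
    have hdrop_last : (x' ++ [a]).drop (x'.length + 1) = [] := by
      rw [List.drop_eq_nil_iff, hlen]
    have htake_last : (x' ++ [a]).take (x'.length + 1) = x' ++ [a] := by
      rw [← hlen]; exact List.take_length
    have hterm : ∀ k, k ≤ x'.length →
        ((x' ++ [a]).drop k = x'.drop k ++ [a] ∧
         (x' ++ [a]).take k = x'.take k ∧
         (x' ++ [a]).length - k = (x'.length - k) + 1) := by
      intro k hk
      exact ⟨List.drop_append_of_le_length hk, List.take_append_of_le_length hk, by omega⟩
    cases y with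
    | nil =>
      have hz : ∀ k ∈ Finset.range (x'.length + 1),
          (if wconj ((x' ++ [a]).drop k) <+: ([] : Word)
            then dimq q ((x' ++ [a]).take k ++ ([] : Word).drop (x'.length + 1 - k))
            else 0) = 0 := by
        intro k hk
        have hk' : k ≤ x'.length := by
          have := Finset.mem_range.mp hk; omega
        rw [if_neg]
        intro hpre
        have h1 : wconj ((x' ++ [a]).drop k) = [] := List.prefix_nil.mp hpre
        rw [wconj_eq_nil_iff, (hterm k hk').1] at h1
        simpa using congrArg List.length h1
      rw [Finset.sum_eq_zero hz, hdrop_last, htake_last]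
      simp [List.nil_prefix]
    | cons b y' =>
      have hstep : ∀ k, k ≤ x'.length →
          ((if wconj ((x' ++ [a]).drop k) <+: (b :: y')
            then dimq q ((x' ++ [a]).take k ++ (b :: y').drop (x'.length + 1 - k))
            else 0)
          = (if b = !a then
              (if wconj (x'.drop k) <+: y'
                then dimq q (x'.take k ++ y'.drop (x'.length - k)) else 0) else 0)) := by
        intro k hk'
        obtain ⟨hd, ht, _⟩ := hterm k hk'
        have hl : x'.length + 1 - k = (x'.length - k) + 1 := by omega
        rw [hd, ht, hl, wconj_append, wconj_singleton, List.singleton_append,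
          List.drop_succ_cons]
        simp only [List.cons_prefix_cons]
        by_cases hba : b = !a
        · rw [if_pos hba]
          by_cases hpre : wconj (x'.drop k) <+: y'
          · rw [if_pos ⟨hba.symm, hpre⟩, if_pos hpre]
          · rw [if_neg (fun h => hpre h.2), if_neg hpre]
        · rw [if_neg hba, if_neg (fun h => hba h.1.symm)]
      have hmain : ∀ k ∈ Finset.range (x'.length + 1),
          ((if wconj ((x' ++ [a]).drop k) <+: (b :: y')
            then dimq q ((x' ++ [a]).take k ++ (b :: y').drop (x'.length + 1 - k))
            else 0)
          = (if b = !a then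
              (if wconj (x'.drop k) <+: y'
                then dimq q (x'.take k ++ y'.drop (x'.length - k)) else 0) else 0)) := by
        intro k hk
        exact hstep k (by have := Finset.mem_range.mp hk; omega)
      rw [Finset.sum_congr rfl hmain, hdrop_last, htake_last]
      rw [if_pos (show wconj ([] : Word) <+: (b :: y') from List.nil_prefix)]
      have hassoc : (x' ++ [a]) ++ (b :: y').drop (x'.length + 1 - (x'.length + 1))
          = x' ++ a :: b :: y' := by simp
      rw [hassoc, dimq_key hq0 hq1 x' a b y']
      by_cases hba : b = !a
      · simp only [if_pos hba]
        rw [ih y']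
        ring
      · simp only [if_neg hba]
        rw [Finset.sum_const_zero, zero_add, add_zero]

end G


lemma fm_cond_iff (x y z : Word) (j : ℕ) (hj : j ≤ x.length) :
    (x.take j <+: y ∧ z = wconj (x.drop j) ++ y.drop j) ↔
    (wconj (x.drop j) <+: z ∧ y = x.take j ++ z.drop (x.length - j)) := by
  have hlw : (wconj (x.drop j)).length = x.length - j := by simp
  have hlt : (x.take j).length = j := by simp [hj]
  constructor
  · rintro ⟨h1, rfl⟩
    constructor
    · exact List.prefix_append _ _
    · rw [List.drop_left' hlw]
      have := List.prefix_iff_eq_take.mp h1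
      rw [hlt] at this
      conv_lhs => rw [← List.take_append_drop j y, ← this]
  · rintro ⟨h1, rfl⟩
    constructor
    · exact List.prefix_append _ _
    · rw [List.drop_left' hlt]
      have := List.prefix_iff_eq_take.mp h1
      rw [hlw] at this
      conv_lhs => rw [← List.take_append_drop (x.length - j) z, ← this]

lemma fm_frobenius (x y z : Word) : fm (wconj x) y z = fm x z y := by
  rw [fm, fm]
  simp only [wconj_length]
  apply Finset.card_nbij' (i := fun k => x.length - k) (j := fun k => x.length - k)
  · intro k hk
    simp only [Finset.mem_coe, Finset.mem_filter, Finset.mem_range] at hk ⊢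
    obtain ⟨hkr, h1, h2⟩ := hk
    have hk' : k ≤ x.length := by omega
    refine ⟨by omega, ?_⟩
    rw [wconj_drop _ _ hk', wconj_wconj] at h1
    rw [wconj_take _ _ hk'] at h2
    exact (fm_cond_iff x y z (x.length - k) (by omega)).mp ⟨h1, h2⟩
  · intro j hj
    simp only [Finset.mem_coe, Finset.mem_filter, Finset.mem_range] at hj ⊢
    obtain ⟨hjr, h1, h2⟩ := hj
    have hj' : j ≤ x.length := by omega
    have hk' : x.length - j ≤ x.length := by omega
    refine ⟨by omega, ?_⟩
    rw [wconj_drop _ _ hk', wconj_wconj]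
    rw [wconj_take _ _ hk']
    have hjj : x.length - (x.length - j) = j := by omega
    rw [hjj]
    exact (fm_cond_iff x y z j hj').mpr ⟨h1, h2⟩
  · intro k hk
    simp only [Finset.mem_coe, Finset.mem_filter, Finset.mem_range] at hk ⊢
    omega
  · intro j hj
    simp only [Finset.mem_coe, Finset.mem_filter, Finset.mem_range] at hj ⊢
    omega

lemma fm_card_ne_zero {x z y : Word} (h : fm x z y ≠ 0) :
    ∃ k, k ∈ Finset.range (x.length + 1) ∧ (wconj (x.drop k) <+: z) ∧
      y = x.take k ++ z.drop (x.length - k) := by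
  rw [fm, Finset.card_ne_zero] at h
  obtain ⟨k, hk⟩ := h
  simp only [Finset.mem_filter] at hk
  exact ⟨k, hk.1, hk.2.1, hk.2.2⟩

lemma fm_eq_zero_of_not_mem (x z y : Word)
    (h : y ∉ (Finset.range (x.length + 1)).image
      (fun k => x.take k ++ z.drop (x.length - k))) : fm x z y = 0 := by
  by_contra hne
  obtain ⟨k, hk1, _, hk3⟩ := fm_card_ne_zero hne
  exact h (Finset.mem_image.mpr ⟨k, hk1, hk3.symm⟩)

lemma fm_mem_of_ne_zero {x z y : Word} (h : fm x z y ≠ 0) :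
    z ∈ (Finset.range (x.length + 1)).image (fun k => wconj (x.drop k) ++ y.drop k) := by
  obtain ⟨k, hk1, hk2, hk3⟩ := fm_card_ne_zero h
  have hk' : k ≤ x.length := by
    have := Finset.mem_range.mp hk1; omega
  have := (fm_cond_iff x y z k hk').mpr ⟨hk2, hk3⟩
  exact Finset.mem_image.mpr ⟨k, hk1, this.2.symm⟩

section H
variable {q : ℝ} (hq0 : 0 < q) (hq1 : q < 1)
include hq0 hq1

lemma fm_mul_dimq_hasSum (x z : Word) :
    HasSum (fun y => (fm x z y : ℝ) * dimq q y) (dimq q x * dimq q z) := by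
  classical
  set Y := (Finset.range (x.length + 1)).image
    (fun k => x.take k ++ z.drop (x.length - k)) with hY
  have hvanish : ∀ y ∉ Y, (fm x z y : ℝ) * dimq q y = 0 := by
    intro y hy
    rw [fm_eq_zero_of_not_mem x z y hy]
    simp
  have hsum : (∑ y ∈ Y, (fm x z y : ℝ) * dimq q y) = dimq q x * dimq q z := by
    have hterm : ∀ y, (fm x z y : ℝ) * dimq q y =
        ∑ k ∈ Finset.range (x.length + 1),
          (if (wconj (x.drop k) <+: z ∧ y = x.take k ++ z.drop (x.length - k))
            then dimq q y else 0) := by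
      intro y
      rw [fm, Finset.card_filter]
      push_cast
      rw [Finset.sum_mul]
      refine Finset.sum_congr rfl (fun k _ => ?_)
      by_cases hc : wconj (x.drop k) <+: z ∧ y = x.take k ++ z.drop (x.length - k)
      · rw [if_pos hc, if_pos hc, one_mul]
      · rw [if_neg hc, if_neg hc, zero_mul]
    calc (∑ y ∈ Y, (fm x z y : ℝ) * dimq q y)
        = ∑ y ∈ Y, ∑ k ∈ Finset.range (x.length + 1),
            (if (wconj (x.drop k) <+: z ∧ y = x.take k ++ z.drop (x.length - k))
              then dimq q y else 0) := Finset.sum_congr rfl (fun y _ => hterm y)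
      _ = ∑ k ∈ Finset.range (x.length + 1), ∑ y ∈ Y,
            (if (wconj (x.drop k) <+: z ∧ y = x.take k ++ z.drop (x.length - k))
              then dimq q y else 0) := Finset.sum_comm
      _ = ∑ k ∈ Finset.range (x.length + 1),
            (if wconj (x.drop k) <+: z
              then dimq q (x.take k ++ z.drop (x.length - k)) else 0) := by
          refine Finset.sum_congr rfl (fun k hk => ?_)
          by_cases hc : wconj (x.drop k) <+: z
          · simp only [hc, true_and, if_true]
            have hmem : x.take k ++ z.drop (x.length - k) ∈ Y :=
              Finset.mem_image.mpr ⟨k, hk, rfl⟩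
            rw [Finset.sum_ite_eq' Y _ (fun y => dimq q y), if_pos hmem]
          · simp [hc]
      _ = dimq q x * dimq q z := key_sum hq0 hq1 x z
  have : HasSum (fun y => (fm x z y : ℝ) * dimq q y) (∑ y ∈ Y, (fm x z y : ℝ) * dimq q y) :=
    hasSum_sum_of_ne_finset_zero hvanish
  rwa [hsum] at this
end H

/-- For every probability measure `μ` on `I` and every `x ∈ I`,
`Σ_y p(x,y) = 1`: `p` is a stochastic Markov kernel on `I`. -/
theorem pker_stochastic (q : ℝ) (hq0 : 0 < q) (hq1 : q < 1)
    (μ : Word → ℝ) (hμ0 : ∀ z, 0 ≤ μ z) (hμ1 : HasSum μ 1) (x : Word) :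
    HasSum (fun y => pker q μ x y) 1 := by
  classical
  set h : Word → Word → ℝ :=
    fun z y => μ z * (fm x z y : ℝ) * dimq q y / (dimq q x * dimq q z) with hh
  have hdx : dimq q x ≠ 0 := ne_of_gt (dimq_pos hq0 hq1 x)
  have hdz : ∀ z, dimq q z ≠ 0 := fun z => ne_of_gt (dimq_pos hq0 hq1 z)
  have hnonneg : ∀ z y, 0 ≤ h z y := by
    intro z y
    apply div_nonneg
    · exact mul_nonneg (mul_nonneg (hμ0 z) (Nat.cast_nonneg _))
        (le_of_lt (dimq_pos hq0 hq1 y))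
    · exact mul_nonneg (le_of_lt (dimq_pos hq0 hq1 x)) (le_of_lt (dimq_pos hq0 hq1 z))
  -- each row sums to μ z
  have hrow : ∀ z, HasSum (fun y => h z y) (μ z) := by
    intro z
    have h1 := (fm_mul_dimq_hasSum hq0 hq1 x z).mul_left
      (μ z / (dimq q x * dimq q z))
    have h2 : (μ z / (dimq q x * dimq q z)) * (dimq q x * dimq q z) = μ z :=
      div_mul_cancel₀ _ (mul_ne_zero hdx (hdz z))
    rw [h2] at h1
    convert h1 using 2 with y
    · rfl
    rw [hh]
    ring
  -- pker equals the finite z-sum of h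
  have hpker : ∀ y, pker q μ x y = ∑ z ∈ (Finset.range (x.length + 1)).image
      (fun k => wconj (x.drop k) ++ y.drop k), h z y := by
    intro y
    rw [pker]
    have hfro : (fun z : Word => μ z * (fm (wconj x) y z : ℝ) * dimq q y
        / (dimq q x * dimq q z)) = fun z => h z y := by
      funext z
      rw [fm_frobenius, hh]
    rw [hfro]
    apply finsum_eq_finset_sum_of_support_subset
    intro z hz
    simp only [Function.mem_support] at hz
    have hfm : fm x z y ≠ 0 := by
      intro h0
      apply hz
      rw [hh]
      simp [h0]
    exact fm_mem_of_ne_zero hfm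
  -- each column z-sum is pker
  have hcol : ∀ y, HasSum (fun z => h z y) (pker q μ x y) := by
    intro y
    rw [hpker y]
    apply hasSum_sum_of_ne_finset_zero
    intro z hz
    have hfm : fm x z y = 0 := by
      by_contra hne
      exact hz (fm_mem_of_ne_zero hne)
    rw [hh]
    simp [hfm]
  -- summability of the double family
  have hF : Summable (fun p : Word × Word => h p.1 p.2) := by
    rw [summable_prod_of_nonneg (fun p => hnonneg p.1 p.2)]
    refine ⟨fun z => (hrow z).summable, ?_⟩
    have : (fun z => ∑' y, h z y) = μ := by
      funext z
      exact (hrow z).tsum_eq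
    rw [this]
    exact hμ1.summable
  obtain ⟨S, hS⟩ := hF
  have hS1 : S = 1 := by
    have h1 := HasSum.prod_fiberwise hS (fun z => hrow z)
    exact h1.unique hμ1
  subst hS1
  have hswap : HasSum (fun p : Word × Word => h p.2 p.1) 1 := by
    have := (Equiv.prodComm Word Word).hasSum_iff.mpr hS
    exact this
  exact HasSum.prod_fiberwise hswap (fun y => hcol y)
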